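/- arXiv:1204.4251 — 2 statements merged into one kernel-verified Lean document; each statement's English description precedes it below -/
import Mathlib

section
/- Let n ≥ 5, let X and Y be adjacent vertices of the augmented cube AQ_n, let Z = X̄_n (with Y ≠ Z), so that P = (Y, X, Z) is a path of length two, and let U be a vertex of N_{AQ_n}(P). Then |N_{AQ_n}({U, X, Y, Z})| ≥ 8n − 29, where N_{AQ_n}({U, X, Y, Z}) is the set of vertices outside {U, X, Y, Z} adjacent to at least one of U, X, Y, Z. -/
/-- Flip the single bit at index `i` (paper bit `i+1`), i.e. the map `X ↦ X_{i+1}`. -/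
def flipBit {n : ℕ} (i : Fin n) (X : Fin n → Bool) : Fin n → Bool :=
  fun j => if j = i then !(X j) else X j

/-- Flip all bits at indices `≤ i` (paper bits `i+1, i, …, 1`), i.e. the map `X ↦ X̄_{i+1}`. -/
def flipDown {n : ℕ} (i : Fin n) (X : Fin n → Bool) : Fin n → Bool :=
  fun j => if j ≤ i then !(X j) else X j

lemma flipBit_flipBit {n : ℕ} (i : Fin n) (X : Fin n → Bool) :
    flipBit i (flipBit i X) = X := by
  funext j; by_cases h : j = i <;> simp [flipBit, h]

lemma flipDown_flipDown {n : ℕ} (i : Fin n) (X : Fin n → Bool) :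
    flipDown i (flipDown i X) = X := by
  funext j; by_cases h : j ≤ i <;> simp [flipDown, h]

/-- The augmented cube `AQ_n`: vertices are `n`-bit strings; two distinct vertices `X, Y`
are adjacent iff `Y = X_i` for some `1 ≤ i ≤ n` (a hypercube edge) or `Y = X̄_i` for some
`2 ≤ i ≤ n` (a complement edge).  Paper bit `i` corresponds to index `i - 1 : Fin n`. -/
def augCube (n : ℕ) : SimpleGraph (Fin n → Bool) where
  Adj X Y := X ≠ Y ∧
    ((∃ i : Fin n, Y = flipBit i X) ∨ (∃ i : Fin n, 1 ≤ i.val ∧ Y = flipDown i X))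
  symm := by
    constructor
    rintro X Y ⟨hne, h⟩
    refine ⟨hne.symm, ?_⟩
    rcases h with ⟨i, rfl⟩ | ⟨i, hi, rfl⟩
    · exact Or.inl ⟨i, (flipBit_flipBit i X).symm⟩
    · exact Or.inr ⟨i, hi, (flipDown_flipDown i X).symm⟩
  loopless := ⟨fun X h => h.1 rfl⟩

namespace AQtest
variable {n : ℕ}

def eB (i : Fin n) : Fin n → Bool := fun j => decide (j = i)
def eD (i : Fin n) : Fin n → Bool := fun j => decide (j ≤ i)
def mk0 : Fin n → Bool := fun _ => false
def oneM : Fin n → Bool := fun _ => true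
def mx (a b : Fin n → Bool) : Fin n → Bool := fun j => xor (a j) (b j)

@[simp] lemma eB_apply (i j : Fin n) : eB i j = decide (j = i) := rfl
@[simp] lemma eD_apply (i j : Fin n) : eD i j = decide (j ≤ i) := rfl
@[simp] lemma mx_apply (a b : Fin n → Bool) (j) : mx a b j = xor (a j) (b j) := rfl

lemma mx_comm (a b : Fin n → Bool) : mx a b = mx b a := by
  funext j; simp [Bool.xor_comm]

@[simp] lemma mx_cancel (a b : Fin n → Bool) : mx a (mx a b) = b := by
  funext j; simp [← Bool.xor_assoc]

lemma mx_self (a : Fin n → Bool) : mx a a = mk0 := by funext j; simp [mk0]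

lemma mx_inj (a : Fin n → Bool) : Function.Injective (mx a) := by
  intro x y h
  have h2 := congrArg (mx a) h
  simpa using h2

lemma mx_mx (v a b : Fin n → Bool) : mx (mx v a) (mx v b) = mx a b := by
  funext j
  simp only [mx_apply]
  cases v j <;> cases a j <;> cases b j <;> rfl

lemma mx_swap (v w a : Fin n → Bool) : mx (mx v w) a = mx w (mx v a) := by
  funext j
  simp only [mx_apply]
  cases v j <;> cases w j <;> cases a j <;> rfl

@[simp] lemma mx_zero (a : Fin n → Bool) : mx a mk0 = a := by
  funext j; simp [mk0]

open Finset

def Mset (n : ℕ) : Finset (Fin n → Bool) :=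
  (univ.image eB) ∪ ((univ.filter (fun i : Fin n => 1 ≤ i.val)).image eD)

lemma mem_Mset {a : Fin n → Bool} :
    a ∈ Mset n ↔ (∃ i, a = eB i) ∨ (∃ i : Fin n, 1 ≤ i.val ∧ a = eD i) := by
  simp [Mset, eq_comm]

lemma zero_not_mem : mk0 ∉ Mset n := by
  rw [mem_Mset]
  rintro (⟨i, hi⟩ | ⟨i, _, hi⟩) <;>
  · have := congrFun hi i
    simp [mk0] at this

lemma eB_inj : Function.Injective (eB (n := n)) := by
  intro i k h
  have := congrFun h i
  simpa [eq_comm] using this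

lemma eD_inj : Function.Injective (eD (n := n)) := by
  intro i k h
  have h1 := congrFun h i
  have h2 := congrFun h k
  simp at h1 h2
  exact le_antisymm h1 h2

lemma decide_false' {p : Prop} [Decidable p] (h : ¬ p) : (decide p) = false := by simp [h]

lemma bool_ext {x y : Bool} (h : (x = true) ↔ (y = true)) : x = y := by
  cases x <;> cases y <;> simp_all

lemma xor_true_iff (a b : Bool) : (xor a b = true) ↔ ¬((a = true) ↔ (b = true)) := by
  cases a <;> cases b <;> simp

lemma card_Mset (hn : 1 ≤ n) : (Mset n).card = 2 * n - 1 := by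
  have hd : Disjoint (univ.image (eB (n := n)))
      ((univ.filter (fun i : Fin n => 1 ≤ i.val)).image eD) := by
    rw [Finset.disjoint_left]
    rintro a ha hb
    simp only [mem_image, mem_filter, mem_univ, true_and] at ha hb
    obtain ⟨i, hi⟩ := ha
    obtain ⟨k, hk1, hk2⟩ := hb
    rw [← hi] at hk2
    have h0 : eB i ⟨0, hn⟩ = eD k ⟨0, hn⟩ := by rw [hk2]
    have h0' : i = ⟨0, hn⟩ := by
      simpa [Fin.le_def, eq_comm] using h0
    have hk : eB i k = eD k k := by rw [hk2]
    rw [h0'] at hk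
    simp [Fin.ext_iff] at hk
    omega
  rw [Mset, Finset.card_union_of_disjoint hd,
    Finset.card_image_of_injective _ eB_inj,
    Finset.card_image_of_injective _ eD_inj]
  have : (univ.filter (fun i : Fin n => 1 ≤ i.val)) = univ \ {⟨0, hn⟩} := by
    ext i
    simp [Fin.ext_iff]
    omega
  rw [this, Finset.card_sdiff_of_subset (by simp)]
  simp
  omega

lemma classify (d : Fin n → Bool) (t : Fin n) (ht : d t = true)
    (htop : ∀ j, t < j → d j = false) (a : Fin n → Bool)
    (haM : a ∈ Mset n) (hbM : mx d a ∈ Mset n) :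
    a = eB t ∨ a = eD t ∨ a = mx d (eB t) ∨ a = mx d (eD t) ∨
      (d = eD t ∧ ∃ h : (t : ℕ) + 1 < n,
        (a = eB ⟨(t : ℕ) + 1, h⟩ ∨ a = eD ⟨(t : ℕ) + 1, h⟩)) := by
  by_cases hhigh : ∀ j, t < j → a j = false
  · by_cases hat : a t = true
    · rcases mem_Mset.1 haM with ⟨T, rfl⟩ | ⟨T, hT1, rfl⟩
      · left
        have : t = T := by simpa using hat
        rw [this]
      · right; left
        have h1 : t ≤ T := by simpa using hat
        have h2 : T ≤ t := by
          by_contra h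
          have := hhigh T (lt_of_not_ge h)
          simp at this
        rw [le_antisymm h2 h1]
    · have hat' : a t = false := by simpa using hat
      have hbt : mx d a t = true := by simp [ht, hat']
      have hbh : ∀ j, t < j → mx d a j = false := fun j hj => by
        simp [htop j hj, hhigh j hj]
      rcases mem_Mset.1 hbM with ⟨T, hb⟩ | ⟨T, hT1, hb⟩
      · right; right; left
        have : t = T := by rw [hb] at hbt; simpa using hbt
        subst this
        rw [← hb, mx_cancel]
      · right; right; right; left
        have h1 : t ≤ T := by rw [hb] at hbt; simpa using hbt
        have h2 : T ≤ t := by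
          by_contra h
          have := hbh T (lt_of_not_ge h)
          rw [hb] at this; simp at this
        have hTt : T = t := le_antisymm h2 h1
        subst hTt
        rw [← hb, mx_cancel]
  · push_neg at hhigh
    obtain ⟨j0, hj0t, hj0⟩ := hhigh
    rw [Bool.ne_false_iff] at hj0
    right; right; right; right
    rcases mem_Mset.1 haM with ⟨T, rfl⟩ | ⟨T, hT1, rfl⟩
    · -- a = eB T with T = j0 > t
      have hjT : j0 = T := by simpa using hj0
      subst hjT
      have htT : t < j0 := hj0t
      have hat' : eB j0 t = false := decide_false' (ne_of_lt htT)
      have hbT : mx d (eB j0) j0 = true := by simp [htop j0 htT]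
      have hbt : mx d (eB j0) t = true := by simp [ht, ne_of_lt htT]
      rcases mem_Mset.1 hbM with ⟨T', hb⟩ | ⟨T', hT'1, hb⟩
      · exfalso
        have e1 : j0 = T' := by rw [hb] at hbT; simpa using hbT
        have e2 : t = T' := by rw [hb] at hbt; simpa using hbt
        rw [← e2] at e1
        exact ne_of_lt htT e1.symm
      · have hTT' : j0 ≤ T' := by rw [hb] at hbT; simpa using hbT
        have hTsucc : (j0 : ℕ) = (t : ℕ) + 1 := by
          by_contra hne
          have hlt : (t : ℕ) + 1 < (j0 : ℕ) := by
            rw [Fin.lt_def] at hj0t; omega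
          set j : Fin n := ⟨(t : ℕ) + 1, lt_trans hlt j0.isLt⟩ with hjdef
          have hd : d j = false := htop j (by show (t : ℕ) < (t : ℕ) + 1; omega)
          have hNe : ¬ j = j0 := by rw [Fin.ext_iff]; show ¬ (t : ℕ) + 1 = (j0 : ℕ); omega
          have ha2 : eB j0 j = false := decide_false' hNe
          have hbj : mx d (eB j0) j = false := by simp [hd, hNe]
          rw [hb] at hbj
          have hjle : j ≤ T' := le_trans (by rw [Fin.le_def]; show (t : ℕ) + 1 ≤ (j0 : ℕ); omega) hTT'
          rw [eD_apply, decide_eq_true hjle] at hbj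
          simp at hbj
        have hdeq : d = eD t := by
          funext j
          by_cases hjt : j ≤ t
          · have hNe : ¬ j = j0 := by
              rw [Fin.ext_iff]; rw [Fin.le_def] at hjt; omega
            have ha2 : eB j0 j = false := decide_false' hNe
            have hjle : j ≤ T' := le_trans (le_trans hjt (le_of_lt hj0t)) hTT'
            have hjb : mx d (eB j0) j = true := by
              rw [hb, eD_apply]; exact decide_eq_true hjle
            rw [mx_apply, ha2, Bool.xor_false] at hjb
            rw [hjb, eD_apply, decide_eq_true hjt]
          · rw [htop j (lt_of_not_ge hjt), eD_apply, decide_false' hjt]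
        have hlt2 : (t : ℕ) + 1 < n := by rw [← hTsucc]; exact j0.isLt
        refine ⟨hdeq, hlt2, Or.inl ?_⟩
        exact congrArg eB (Fin.ext (by simp [hTsucc]))
    · -- a = eD T with T > t
      have hjT : j0 ≤ T := by simpa using hj0
      have htT : t < T := lt_of_lt_of_le hj0t hjT
      have hat2 : eD T t = true := decide_eq_true (le_of_lt htT)
      have hbt : mx d (eD T) t = false := by simp [ht, le_of_lt htT]
      have hbT : mx d (eD T) T = true := by simp [htop T htT]
      rcases mem_Mset.1 hbM with ⟨T', hb⟩ | ⟨T', hT'1, hb⟩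
      · have e1 : T = T' := by rw [hb] at hbT; simpa using hbT
        subst e1
        have hTsucc : (T : ℕ) = (t : ℕ) + 1 := by
          by_contra hne
          have hlt : (t : ℕ) + 1 < (T : ℕ) := by
            rw [Fin.lt_def] at htT; omega
          set j : Fin n := ⟨(t : ℕ) + 1, lt_trans hlt T.isLt⟩ with hjdef
          have hd : d j = false := htop j (by show (t : ℕ) < (t : ℕ) + 1; omega)
          have hjleT : j ≤ T := by rw [Fin.le_def]; show (t : ℕ) + 1 ≤ (T : ℕ); omega
          have ha2 : eD T j = true := decide_eq_true hjleT
          have hbj : mx d (eD T) j = true := by simp [hd, hjleT]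
          rw [hb] at hbj
          have : j = T := by simpa using hbj
          rw [Fin.ext_iff] at this; change (t : ℕ) + 1 = (T : ℕ) at this; omega
        have hdeq : d = eD t := by
          funext j
          by_cases hjt : j ≤ t
          · have hjleT : j ≤ T := le_trans hjt (le_of_lt htT)
            have ha2 : eD T j = true := decide_eq_true hjleT
            have hNe : ¬ j = T := by
              rw [Fin.ext_iff]; rw [Fin.le_def] at hjt; rw [Fin.lt_def] at htT; omega
            have hjb : mx d (eD T) j = false := by
              rw [hb, eB_apply]; exact decide_false' hNe
            rw [mx_apply, ha2, Bool.xor_true] at hjb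
            have : d j = true := by simpa using hjb
            rw [this, eD_apply, decide_eq_true hjt]
          · rw [htop j (lt_of_not_ge hjt), eD_apply, decide_false' hjt]
        have hlt2 : (t : ℕ) + 1 < n := by rw [← hTsucc]; exact T.isLt
        refine ⟨hdeq, hlt2, Or.inr ?_⟩
        exact congrArg eD (Fin.ext (by simp [hTsucc]))
      · exfalso
        have hTT' : T ≤ T' := by rw [hb] at hbT; simpa using hbT
        have : mx d (eD T) t = true := by
          rw [hb, eD_apply]
          exact decide_eq_true (le_trans (le_of_lt htT) hTT')
        rw [this] at hbt
        simp at hbt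

lemma not_mem_Mset (v : Fin n → Bool) (j1 j2 j0 : Fin n) (h12 : j1 ≠ j2)
    (h1 : v j1 = true) (h2 : v j2 = true) (h0 : v j0 = false) (hle : j0 ≤ j1) :
    v ∉ Mset n := by
  rw [mem_Mset]
  rintro (⟨k, rfl⟩ | ⟨k, hk1, rfl⟩)
  · have e1 : j1 = k := by simpa using h1
    have e2 : j2 = k := by simpa using h2
    exact h12 (e1.trans e2.symm)
  · have e1 : j1 ≤ k := by simpa using h1
    have e0 : ¬ j0 ≤ k := by simpa using h0
    exact e0 (le_trans hle e1)

def Gc (n : ℕ) (d : Fin n → Bool) : ℕ :=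
  ((Mset n).filter (fun a => mx d a ∈ Mset n)).card

lemma card_pair_le {α} [DecidableEq α] (x y : α) : ({x, y} : Finset α).card ≤ 2 :=
  le_trans (card_insert_le _ _) (by simp)

lemma card_quad_le {α} [DecidableEq α] (w x y z : α) :
    ({w, x, y, z} : Finset α).card ≤ 4 := by
  apply le_trans (card_insert_le _ _)
  apply Nat.succ_le_succ
  apply le_trans (card_insert_le _ _)
  apply Nat.succ_le_succ
  exact card_pair_le _ _

lemma exists_top (d : Fin n → Bool) (hd : d ≠ mk0) :
    ∃ t : Fin n, d t = true ∧ ∀ j, t < j → d j = false := by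
  have hex : ∃ j, d j = true := by
    by_contra h
    push_neg at h
    apply hd
    funext j
    have := h j
    show d j = false
    simpa using this
  obtain ⟨j, hj⟩ := hex
  have hFne : (univ.filter (fun j : Fin n => d j = true)).Nonempty := ⟨j, by simp [hj]⟩
  refine ⟨(univ.filter (fun j : Fin n => d j = true)).max' hFne, ?_, ?_⟩
  · have := Finset.max'_mem _ hFne
    simpa using this
  · intro k hk
    by_contra h
    have hk' : k ∈ univ.filter (fun j : Fin n => d j = true) := by
      simp
      simpa using h
    have := Finset.le_max' _ k hk'
    exact absurd this (not_le.2 hk)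

lemma Gc_le_four (d : Fin n → Bool) (hd : d ≠ mk0) : Gc n d ≤ 4 := by
  obtain ⟨t, ht, htop⟩ := exists_top d hd
  by_cases ht1 : (t : ℕ) + 1 < n
  · by_cases hdt : d = eD t
    · have hsub : (Mset n).filter (fun a => mx d a ∈ Mset n) ⊆
          {eB t, mx d (eB t), eB ⟨(t : ℕ) + 1, ht1⟩, eD ⟨(t : ℕ) + 1, ht1⟩} := by
        intro a ha
        rw [mem_filter] at ha
        rcases classify d t ht htop a ha.1 ha.2 with h | h | h | h | ⟨_, hh, hc⟩
        · simp [h]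
        · exfalso
          rw [h, ← hdt, mx_self] at ha
          exact zero_not_mem ha.2
        · simp [h]
        · exfalso
          rw [← hdt, mx_self] at h
          rw [h] at ha
          exact zero_not_mem ha.1
        · rcases hc with h | h <;> simp [h]
      exact le_trans (Finset.card_le_card hsub) (card_quad_le _ _ _ _)
    · have hsub : (Mset n).filter (fun a => mx d a ∈ Mset n) ⊆
          {eB t, eD t, mx d (eB t), mx d (eD t)} := by
        intro a ha
        rw [mem_filter] at ha
        rcases classify d t ht htop a ha.1 ha.2 with h | h | h | h | ⟨hdt', _, _⟩
        · simp [h]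
        · simp [h]
        · simp [h]
        · simp [h]
        · exact absurd hdt' hdt
      exact le_trans (Finset.card_le_card hsub) (card_quad_le _ _ _ _)
  · have hsub : (Mset n).filter (fun a => mx d a ∈ Mset n) ⊆
        {eB t, eD t, mx d (eB t), mx d (eD t)} := by
      intro a ha
      rw [mem_filter] at ha
      rcases classify d t ht htop a ha.1 ha.2 with h | h | h | h | ⟨_, hh, _⟩
      · simp [h]
      · simp [h]
      · simp [h]
      · simp [h]
      · exact absurd hh ht1
    exact le_trans (Finset.card_le_card hsub) (card_quad_le _ _ _ _)

lemma Gc_eB_le_two (i : Fin n) : Gc n (eB i) ≤ 2 := by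
  have ht : eB i i = true := by simp
  have htop : ∀ j, i < j → eB i j = false := fun j hj => decide_false' (ne_of_gt hj)
  by_cases hi : eB i = eD i
  · by_cases hi1 : (i : ℕ) + 1 < n
    · have hsub : (Mset n).filter (fun a => mx (eB i) a ∈ Mset n) ⊆
          {eB ⟨(i : ℕ) + 1, hi1⟩, eD ⟨(i : ℕ) + 1, hi1⟩} := by
        intro a ha
        rw [mem_filter] at ha
        rcases classify (eB i) i ht htop a ha.1 ha.2 with h | h | h | h | ⟨_, hh, hc⟩
        · exfalso
          rw [h, mx_self] at ha
          exact zero_not_mem ha.2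
        · exfalso
          rw [← hi] at h
          rw [h, mx_self] at ha
          exact zero_not_mem ha.2
        · exfalso
          rw [mx_self] at h
          rw [h] at ha
          exact zero_not_mem ha.1
        · exfalso
          rw [← hi, mx_self] at h
          rw [h] at ha
          exact zero_not_mem ha.1
        · rcases hc with h | h <;> simp [h]
      exact le_trans (Finset.card_le_card hsub) (card_pair_le _ _)
    · have hsub : (Mset n).filter (fun a => mx (eB i) a ∈ Mset n) ⊆ (∅ : Finset _) := by
        intro a ha
        rw [mem_filter] at ha
        rcases classify (eB i) i ht htop a ha.1 ha.2 with h | h | h | h | ⟨_, hh, _⟩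
        · exfalso
          rw [h, mx_self] at ha
          exact zero_not_mem ha.2
        · exfalso
          rw [← hi] at h
          rw [h, mx_self] at ha
          exact zero_not_mem ha.2
        · exfalso
          rw [mx_self] at h
          rw [h] at ha
          exact zero_not_mem ha.1
        · exfalso
          rw [← hi, mx_self] at h
          rw [h] at ha
          exact zero_not_mem ha.1
        · exact absurd hh hi1
      exact le_trans (Finset.card_le_card hsub) (by simp)
  · have hsub : (Mset n).filter (fun a => mx (eB i) a ∈ Mset n) ⊆
        {eD i, mx (eB i) (eD i)} := by
      intro a ha
      rw [mem_filter] at ha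
      rcases classify (eB i) i ht htop a ha.1 ha.2 with h | h | h | h | ⟨hdt', _, _⟩
      · exfalso
        rw [h, mx_self] at ha
        exact zero_not_mem ha.2
      · simp [h]
      · exfalso
        rw [mx_self] at h
        rw [h] at ha
        exact zero_not_mem ha.1
      · simp [h]
      · exact absurd hdt' hi
    exact le_trans (Finset.card_le_card hsub) (card_pair_le _ _)

lemma Gc_top_le_two (hn : 0 < n) : Gc n (eD ⟨n - 1, by omega⟩) ≤ 2 := by
  set t : Fin n := ⟨n - 1, by omega⟩ with htdef
  have ht : eD t t = true := by simp
  have htop : ∀ j, t < j → eD t j = false := by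
    intro j hj
    exfalso
    rw [Fin.lt_def] at hj
    have := j.isLt
    simp [htdef] at hj
    omega
  have hsub : (Mset n).filter (fun a => mx (eD t) a ∈ Mset n) ⊆
      {eB t, mx (eD t) (eB t)} := by
    intro a ha
    rw [mem_filter] at ha
    rcases classify (eD t) t ht htop a ha.1 ha.2 with h | h | h | h | ⟨_, hh, _⟩
    · simp [h]
    · exfalso
      rw [h, mx_self] at ha
      exact zero_not_mem ha.2
    · simp [h]
    · exfalso
      rw [mx_self] at h
      rw [h] at ha
      exact zero_not_mem ha.1
    · exfalso
      simp [htdef] at hh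
      omega
  exact le_trans (Finset.card_le_card hsub) (card_pair_le _ _)

lemma Gc_sfx_le_two (s : ℕ) (h2 : 2 ≤ s) (h3 : s + 3 ≤ n) :
    Gc n (fun j : Fin n => decide (s ≤ j.val)) ≤ 2 := by
  set d : Fin n → Bool := fun j : Fin n => decide (s ≤ j.val) with hddef
  set t : Fin n := ⟨n - 1, by omega⟩ with htdef
  have ht : d t = true := decide_eq_true (by simp [htdef]; omega)
  have htop : ∀ j, t < j → d j = false := by
    intro j hj
    exfalso
    rw [Fin.lt_def] at hj
    have := j.isLt
    simp [htdef] at hj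
    omega
  have key : mx d (eB t) ∉ Mset n := by
    refine not_mem_Mset _ ⟨s, by omega⟩ ⟨s + 1, by omega⟩ ⟨0, by omega⟩ ?_ ?_ ?_ ?_ ?_
    · rw [Fin.ne_iff_vne]; simp
    · have hne : ¬ ((⟨s, by omega⟩ : Fin n) = t) := by
        rw [Fin.ext_iff]; simp [htdef]; omega
      simp [hddef, hne]
    · have hne : ¬ ((⟨s + 1, by omega⟩ : Fin n) = t) := by
        rw [Fin.ext_iff]; simp [htdef]; omega
      simp [hddef, hne]
    · have hne : ¬ ((⟨0, by omega⟩ : Fin n) = t) := by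
        rw [Fin.ext_iff]; simp [htdef]; omega
      simp [hddef, hne]
      omega
    · rw [Fin.le_def]; simp
  have hsub : (Mset n).filter (fun a => mx d a ∈ Mset n) ⊆
      {eD t, mx d (eD t)} := by
    intro a ha
    rw [mem_filter] at ha
    rcases classify d t ht htop a ha.1 ha.2 with h | h | h | h | ⟨_, hh, _⟩
    · exfalso
      rw [h] at ha
      exact key ha.2
    · simp [h]
    · exfalso
      rw [h] at ha
      exact key ha.1
    · simp [h]
    · exfalso
      simp [htdef] at hh
      omega
  exact le_trans (Finset.card_le_card hsub) (card_pair_le _ _)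

lemma Gc_ps_le_two (p q : ℕ) (h1 : 1 ≤ p) (hpq : p ≤ q) (h3 : q + 3 ≤ n) :
    Gc n (fun j : Fin n => decide (j.val < p ∨ q < j.val)) ≤ 2 := by
  set d : Fin n → Bool := fun j : Fin n => decide (j.val < p ∨ q < j.val) with hddef
  set t : Fin n := ⟨n - 1, by omega⟩ with htdef
  have ht : d t = true := decide_eq_true (by simp [htdef]; omega)
  have htop : ∀ j, t < j → d j = false := by
    intro j hj
    exfalso
    rw [Fin.lt_def] at hj
    have := j.isLt
    simp [htdef] at hj
    omega
  have key : mx d (eB t) ∉ Mset n := by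
    refine not_mem_Mset _ ⟨q + 1, by omega⟩ ⟨0, by omega⟩ ⟨p, by omega⟩ ?_ ?_ ?_ ?_ ?_
    · rw [Fin.ne_iff_vne]; simp
    · have hne : ¬ ((⟨q + 1, by omega⟩ : Fin n) = t) := by
        rw [Fin.ext_iff]; simp [htdef]; omega
      simp [hddef, hne]
    · have hne : ¬ ((⟨0, by omega⟩ : Fin n) = t) := by
        rw [Fin.ext_iff]; simp [htdef]; omega
      simp [hddef, hne]
      omega
    · have hne : ¬ ((⟨p, by omega⟩ : Fin n) = t) := by
        rw [Fin.ext_iff]; simp [htdef]; omega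
      simp [hddef, hne]
      omega
    · rw [Fin.le_def]; simp; omega
  have hsub : (Mset n).filter (fun a => mx d a ∈ Mset n) ⊆
      {eD t, mx d (eD t)} := by
    intro a ha
    rw [mem_filter] at ha
    rcases classify d t ht htop a ha.1 ha.2 with h | h | h | h | ⟨_, hh, _⟩
    · exfalso
      rw [h] at ha
      exact key ha.2
    · simp [h]
    · exfalso
      rw [h] at ha
      exact key ha.1
    · simp [h]
    · exfalso
      simp [htdef] at hh
      omega
  exact le_trans (Finset.card_le_card hsub) (card_pair_le _ _)

-- mask identities
lemma oneM_eq_eD (hn : 0 < n) : (oneM : Fin n → Bool) = eD ⟨n - 1, by omega⟩ := by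
  funext j
  have := j.isLt
  apply bool_ext
  simp only [mx_apply, eB_apply, eD_apply, oneM, mk0, xor_true_iff, decide_eq_true_eq,
    Fin.le_def, Fin.ext_iff, Fin.val_mk, eq_self_iff_true, iff_true, true_iff, not_not]
  omega

lemma mx_eD_oneM (m : Fin n) :
    mx (eD m) oneM = fun j : Fin n => decide ((m : ℕ) + 1 ≤ j.val) := by
  funext j
  apply bool_ext
  simp only [mx_apply, eB_apply, eD_apply, oneM, mk0, xor_true_iff, decide_eq_true_eq,
    Fin.le_def, Fin.ext_iff, Fin.val_mk, eq_self_iff_true, iff_true, true_iff, not_not]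
  omega

lemma sfx_top_eq_eB (hn : 0 < n) :
    (fun j : Fin n => decide (n - 1 ≤ j.val)) = eB ⟨n - 1, by omega⟩ := by
  funext j
  have := j.isLt
  apply bool_ext
  simp only [mx_apply, eB_apply, eD_apply, oneM, mk0, xor_true_iff, decide_eq_true_eq,
    Fin.le_def, Fin.ext_iff, Fin.val_mk, eq_self_iff_true, iff_true, true_iff, not_not]
  omega

lemma stepA (hn : 5 ≤ n) (v : Fin n → Bool) (hv : v ∈ Mset n) (hv1 : v ≠ oneM)
    (g1 : ¬ Gc n v ≤ 2) (g2 : ¬ Gc n (mx v oneM) ≤ 2) :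
    v = eD ⟨n - 3, by omega⟩ := by
  rcases mem_Mset.1 hv with ⟨i, rfl⟩ | ⟨m, hm1, rfl⟩
  · exact absurd (Gc_eB_le_two i) g1
  · have hmn : (m : ℕ) ≤ n - 2 := by
      by_contra h
      apply hv1
      have hm : (m : ℕ) = n - 1 := by have := m.isLt; omega
      funext j
      have := j.isLt
      apply bool_ext
      simp only [mx_apply, eB_apply, eD_apply, oneM, mk0, xor_true_iff, decide_eq_true_eq,
        Fin.le_def, Fin.ext_iff, Fin.val_mk, eq_self_iff_true, iff_true, true_iff, not_not]
      omega
    by_cases hm3 : (m : ℕ) = n - 3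
    · exact congrArg eD (Fin.ext (by simp [hm3]))
    · exfalso
      rw [mx_eD_oneM] at g2
      by_cases hm2 : (m : ℕ) = n - 2
      · apply g2
        have he : (fun j : Fin n => decide ((m : ℕ) + 1 ≤ j.val)) =
            (fun j : Fin n => decide (n - 1 ≤ j.val)) := by
          have h' : (m : ℕ) + 1 = n - 1 := by omega
          rw [h']
        rw [he, sfx_top_eq_eB (by omega)]
        exact Gc_eB_le_two _
      · exact g2 (Gc_sfx_le_two ((m : ℕ) + 1) (by omega) (by omega))

lemma second (hn : 5 ≤ n) (y u : Fin n → Bool) (hy : y ∈ Mset n) (hy1 : y ≠ oneM)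
    (hu0 : u ≠ mk0) (huy : u ≠ y) (hu1 : u ≠ oneM)
    (hadj : u ∈ Mset n ∨ mx y u ∈ Mset n ∨ mx oneM u ∈ Mset n) :
    Gc n y ≤ 2 ∨ Gc n (mx y oneM) ≤ 2 ∨ Gc n u ≤ 2 ∨
      Gc n (mx u oneM) ≤ 2 ∨ Gc n (mx y u) ≤ 2 := by
  by_contra hc
  push_neg at hc
  obtain ⟨g1, g2, g3, g4, g5⟩ := hc
  replace g1 := not_le.2 g1
  replace g2 := not_le.2 g2
  replace g3 := not_le.2 g3
  replace g4 := not_le.2 g4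
  replace g5 := not_le.2 g5
  have hy3 : y = eD ⟨n - 3, by omega⟩ := stepA hn y hy hy1 g1 g2
  rcases hadj with hu | hu | hu
  · have : u = eD ⟨n - 3, by omega⟩ := stepA hn u hu hu1 g3 g4
    exact huy (this.trans hy3.symm)
  · rcases mem_Mset.1 hu with ⟨i, hw⟩ | ⟨m, hm1, hw⟩
    · rw [hw] at g5
      exact g5 (Gc_eB_le_two i)
    · have hu_eq : u = mx y (eD m) := by rw [← hw, mx_cancel]
      by_cases hm3 : (m : ℕ) = n - 3
      · apply hu0
        rw [hu_eq, hy3]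
        have he : (eD m : Fin n → Bool) = eD ⟨n - 3, by omega⟩ :=
          congrArg eD (Fin.ext (by simp [hm3]))
        rw [he, mx_self]
      · by_cases hm1' : (m : ℕ) = n - 1
        · apply g5
          rw [hw]
          have he : (eD m : Fin n → Bool) = eD ⟨n - 1, by omega⟩ :=
            congrArg eD (Fin.ext (by simp [hm1']))
          rw [he]
          exact Gc_top_le_two (by omega)
        · by_cases hm2 : (m : ℕ) = n - 2
          · apply g3
            have he : u = eB ⟨n - 2, by omega⟩ := by
              rw [hu_eq, hy3]
              funext j
              have := j.isLt
              apply bool_ext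
              simp only [mx_apply, eB_apply, eD_apply, oneM, mk0, xor_true_iff,
                decide_eq_true_eq, Fin.le_def, Fin.ext_iff, Fin.val_mk,
                eq_self_iff_true, iff_true, true_iff, not_not]
              omega
            rw [he]
            exact Gc_eB_le_two _
          · apply g4
            have hmle : (m : ℕ) + 1 ≤ n - 3 := by have := m.isLt; omega
            have he : mx u oneM =
                (fun j : Fin n => decide (j.val < (m : ℕ) + 1 ∨ n - 3 < j.val)) := by
              rw [hu_eq, hy3]
              funext j
              have := j.isLt
              apply bool_ext
              simp only [mx_apply, eB_apply, eD_apply, oneM, mk0, xor_true_iff,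
                decide_eq_true_eq, Fin.le_def, Fin.ext_iff, Fin.val_mk,
                eq_self_iff_true, iff_true, true_iff, not_not]
              omega
            rw [he]
            exact Gc_ps_le_two ((m : ℕ) + 1) (n - 3) (by omega) hmle (by omega)
  · have g4' : ¬ Gc n (mx oneM u) ≤ 2 := by rw [mx_comm]; exact g4
    have g3' : ¬ Gc n (mx (mx oneM u) oneM) ≤ 2 := by
      have he : mx (mx oneM u) oneM = u := by rw [mx_comm]; exact mx_cancel _ _
      rw [he]; exact g3
    have hne : mx oneM u ≠ oneM := by
      intro h
      apply hu0
      have h2 := congrArg (mx oneM) h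
      rw [mx_cancel, mx_self] at h2
      exact h2
    have hu' : mx oneM u = eD ⟨n - 3, by omega⟩ := stepA hn _ hu hne g4' g3'
    have hu_eq : u = mx oneM (eD ⟨n - 3, by omega⟩) := by rw [← hu', mx_cancel]
    apply g5
    have he : mx y u = oneM := by
      rw [hy3, hu_eq]
      funext j
      have := j.isLt
      apply bool_ext
      simp only [mx_apply, eB_apply, eD_apply, oneM, mk0, xor_true_iff,
        decide_eq_true_eq, Fin.le_def, Fin.ext_iff, Fin.val_mk,
        eq_self_iff_true, iff_true, true_iff, not_not]
      omega
    rw [he, oneM_eq_eD (by omega : 0 < n)]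
    exact Gc_top_le_two (by omega)

-- bridge to the graph
lemma flipBit_eq (i : Fin n) (X : Fin n → Bool) : flipBit i X = mx X (eB i) := by
  funext j
  by_cases h : j = i <;> simp [flipBit, h]

lemma flipDown_eq (i : Fin n) (X : Fin n → Bool) : flipDown i X = mx X (eD i) := by
  funext j
  by_cases h : j ≤ i <;> simp [flipDown, h]

lemma exists_true_of_mem {a : Fin n → Bool} (haM : a ∈ Mset n) : ∃ j, a j = true := by
  rcases mem_Mset.1 haM with ⟨i, rfl⟩ | ⟨i, _, rfl⟩
  · exact ⟨i, by simp⟩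
  · exact ⟨i, by simp⟩

lemma mx_ne_self {a v : Fin n → Bool} (haM : a ∈ Mset n) : mx v a ≠ v := by
  intro h
  obtain ⟨j, hj⟩ := exists_true_of_mem haM
  have h2 := congrFun h j
  rw [mx_apply, hj] at h2
  cases hv : v j <;> rw [hv] at h2 <;> simp at h2

lemma adj_iff (v w : Fin n → Bool) :
    (augCube n).Adj v w ↔ ∃ a ∈ Mset n, w = mx v a := by
  constructor
  · rintro ⟨hne, ⟨i, rfl⟩ | ⟨i, hi, rfl⟩⟩
    · exact ⟨eB i, mem_Mset.2 (Or.inl ⟨i, rfl⟩), flipBit_eq i v⟩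
    · exact ⟨eD i, mem_Mset.2 (Or.inr ⟨i, hi, rfl⟩), flipDown_eq i v⟩
  · rintro ⟨a, haM, rfl⟩
    refine ⟨(mx_ne_self haM).symm, ?_⟩
    rcases mem_Mset.1 haM with ⟨i, rfl⟩ | ⟨i, hi, rfl⟩
    · exact Or.inl ⟨i, (flipBit_eq i v).symm⟩
    · exact Or.inr ⟨i, hi, (flipDown_eq i v).symm⟩

def Nbr (v : Fin n → Bool) : Finset (Fin n → Bool) := (Mset n).image (fun a => mx v a)

lemma mem_Nbr {v w : Fin n → Bool} : w ∈ Nbr v ↔ (augCube n).Adj v w := by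
  rw [adj_iff, Nbr, mem_image]
  constructor
  · rintro ⟨a, ha, rfl⟩; exact ⟨a, ha, rfl⟩
  · rintro ⟨a, ha, rfl⟩; exact ⟨a, ha, rfl⟩

lemma card_Nbr (hn : 1 ≤ n) (v : Fin n → Bool) : (Nbr v).card = 2 * n - 1 := by
  rw [Nbr, Finset.card_image_of_injective _ (mx_inj v), card_Mset hn]

lemma inter_Nbr_card (v w : Fin n → Bool) :
    (Nbr v ∩ Nbr w).card = Gc n (mx v w) := by
  have hset : Nbr v ∩ Nbr w =
      ((Mset n).filter (fun a => mx (mx v w) a ∈ Mset n)).image (fun a => mx v a) := by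
    ext x
    simp only [mem_inter, Nbr, mem_image, mem_filter]
    constructor
    · rintro ⟨⟨a, haM, rfl⟩, ⟨b, hbM, hb⟩⟩
      refine ⟨a, ⟨haM, ?_⟩, rfl⟩
      have : mx (mx v w) a = b := by
        rw [mx_swap]
        have := congrArg (mx w) hb
        rw [mx_cancel] at this
        rw [← this]
      rw [this]; exact hbM
    · rintro ⟨a, ⟨haM, hfa⟩, rfl⟩
      refine ⟨⟨a, haM, rfl⟩, ⟨mx (mx v w) a, hfa, ?_⟩⟩
      rw [mx_swap, mx_cancel]
  rw [hset, Finset.card_image_of_injective _ (mx_inj v), Gc]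

lemma bonf4 {α : Type*} [DecidableEq α] (A B C D : Finset α) :
    A.card + B.card + C.card + D.card ≤ (A ∪ B ∪ C ∪ D).card +
      ((A ∩ B).card + (A ∩ C).card + (A ∩ D).card + (B ∩ C).card +
        (B ∩ D).card + (C ∩ D).card) := by
  have h1 := Finset.card_union_add_card_inter A B
  have h2 := Finset.card_union_add_card_inter (A ∪ B) C
  have h3 := Finset.card_union_add_card_inter (A ∪ B ∪ C) D
  have i2 : ((A ∪ B) ∩ C).card ≤ (A ∩ C).card + (B ∩ C).card := by
    rw [Finset.union_inter_distrib_right]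
    exact Finset.card_union_le _ _
  have i3 : ((A ∪ B ∪ C) ∩ D).card ≤ (A ∩ D).card + (B ∩ D).card + (C ∩ D).card := by
    rw [Finset.union_inter_distrib_right, Finset.union_inter_distrib_right]
    exact le_trans (Finset.card_union_le _ _)
      (Nat.add_le_add_right (Finset.card_union_le _ _) _)
  omega

lemma mx_ne_zero {v w : Fin n → Bool} (h : v ≠ w) : mx v w ≠ mk0 := by
  intro h0
  apply h
  funext j
  have := congrFun h0 j
  rw [mx_apply] at this
  cases hv : v j <;> cases hw : w j <;> rw [hv, hw] at this <;> simp [mk0] at this <;> rfl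


end AQtest

open AQtest in
/-- Let `n ≥ 5`, let `X`, `Y` be adjacent vertices of `AQ_n`, let `Z = X̄_n` (with
`Y ≠ Z`), so that `P = (Y, X, Z)` is a path of length two, and let `U` be a vertex of
`N(P)`.  Then `|N({U, X, Y, Z})| ≥ 8n - 29`. -/
theorem augCube_four_neighborhood_lower_top (n : ℕ) (hn : 5 ≤ n) (X Y Z U : Fin n → Bool)
    (hYX : (augCube n).Adj Y X) (hZ : Z = flipDown ⟨n - 1, by omega⟩ X) (hYZ : Y ≠ Z)
    (hU : U ∉ ({X, Y, Z} : Set (Fin n → Bool)) ∧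
      ((augCube n).Adj X U ∨ (augCube n).Adj Y U ∨ (augCube n).Adj Z U)) :
    8 * n - 29 ≤ {W | W ∉ ({U, X, Y, Z} : Set (Fin n → Bool)) ∧
      ((augCube n).Adj U W ∨ (augCube n).Adj X W ∨ (augCube n).Adj Y W ∨
        (augCube n).Adj Z W)}.ncard := by
  obtain ⟨hUS, hUadj⟩ := hU
  have hUX : U ≠ X := fun h => hUS (by rw [h]; simp)
  have hUY : U ≠ Y := fun h => hUS (by rw [h]; simp)
  have hUZ : U ≠ Z := fun h => hUS (by rw [h]; simp)
  -- mask coordinates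
  set y : Fin n → Bool := mx X Y with hydef
  set u : Fin n → Bool := mx X U with hudef
  have hYmx : Y = mx X y := by rw [hydef, mx_cancel]
  have hUmx : U = mx X u := by rw [hudef, mx_cancel]
  have hZmx : Z = mx X oneM := by
    rw [hZ, flipDown_eq, oneM_eq_eD (show 0 < n by omega)]
  -- y ∈ M
  have hyM : y ∈ Mset n := by
    obtain ⟨a, haM, hXa⟩ := (adj_iff Y X).1 hYX
    have : y = a := by
      rw [hydef, hXa, mx_comm, mx_cancel]
    rw [this]; exact haM
  have hXY : X ≠ Y := fun h => hYX.1 h.symm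
  have hXZ : X ≠ Z := by
    intro h
    rw [hZmx] at h
    have := congrFun h ⟨0, by omega⟩
    rw [mx_apply] at this
    cases hv : X ⟨0, by omega⟩ <;> rw [hv] at this <;> simp [oneM] at this
  -- hypotheses of `second`
  have hy1 : y ≠ oneM := by
    intro h
    apply hYZ
    rw [hYmx, h, ← hZmx]
  have hu0 : u ≠ mk0 := by
    intro h
    apply hUX
    rw [hUmx, h, mx_zero]
  have huy : u ≠ y := by
    intro h
    apply hUY
    rw [hUmx, h, ← hYmx]
  have hu1 : u ≠ oneM := by
    intro h
    apply hUZ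
    rw [hUmx, h, ← hZmx]
  have hadj : u ∈ Mset n ∨ mx y u ∈ Mset n ∨ mx oneM u ∈ Mset n := by
    rcases hUadj with h | h | h
    · obtain ⟨a, haM, hUa⟩ := (adj_iff X U).1 h
      left
      have : u = a := by rw [hudef, hUa, mx_cancel]
      rw [this]; exact haM
    · obtain ⟨a, haM, hUa⟩ := (adj_iff Y U).1 h
      right; left
      have : mx y u = a := by
        rw [hydef, hudef, mx_mx, hUa, hYmx, hydef, mx_cancel]
      rw [this]; exact haM
    · obtain ⟨a, haM, hUa⟩ := (adj_iff Z U).1 h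
      right; right
      have : mx oneM u = a := by
        have h1 : mx oneM u = mx Z U := by
          rw [hZmx, hUmx, mx_mx]
        rw [h1, hUa, mx_cancel]
      rw [this]; exact haM
  -- the finset version of the neighborhood
  classical
  set T : Finset (Fin n → Bool) :=
    (Nbr U ∪ Nbr X ∪ Nbr Y ∪ Nbr Z) \ {U, X, Y, Z} with hTdef
  have hset : {W | W ∉ ({U, X, Y, Z} : Set (Fin n → Bool)) ∧
      ((augCube n).Adj U W ∨ (augCube n).Adj X W ∨ (augCube n).Adj Y W ∨
        (augCube n).Adj Z W)} = (↑T : Set (Fin n → Bool)) := by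
    ext W
    simp only [Set.mem_setOf_eq, hTdef, Finset.coe_sdiff, Set.mem_diff,
      Finset.coe_union, Set.mem_union, Finset.mem_coe, mem_Nbr,
      Set.mem_insert_iff, Set.mem_singleton_iff, Finset.coe_insert,
      Finset.coe_singleton, or_assoc]
    exact and_comm
  rw [hset, Set.ncard_coe_finset]
  -- cardinalities
  have hcU := card_Nbr (show 1 ≤ n by omega) U
  have hcX := card_Nbr (show 1 ≤ n by omega) X
  have hcY := card_Nbr (show 1 ≤ n by omega) Y
  have hcZ := card_Nbr (show 1 ≤ n by omega) Z
  have hb := bonf4 (Nbr U) (Nbr X) (Nbr Y) (Nbr Z)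
  rw [inter_Nbr_card U X, inter_Nbr_card U Y, inter_Nbr_card U Z,
    inter_Nbr_card X Y, inter_Nbr_card X Z, inter_Nbr_card Y Z] at hb
  -- intersection identities
  have eUX : mx U X = u := by rw [mx_comm]
  have eUY : mx U Y = mx u y := by rw [hUmx, hYmx, mx_mx]
  have eUZ : mx U Z = mx u oneM := by rw [hUmx, hZmx, mx_mx]
  have eXZ : mx X Z = oneM := by rw [hZmx, mx_cancel]
  have eYZ : mx Y Z = mx y oneM := by rw [hYmx, hZmx, mx_mx]
  rw [eUX, eUY, eUZ, ← hydef, eXZ, eYZ] at hb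
  -- Gc bounds
  have hg1 : Gc n u ≤ 4 := Gc_le_four _ (by rw [← eUX]; exact mx_ne_zero hUX)
  have hg2 : Gc n (mx u y) ≤ 4 := Gc_le_four _ (by rw [← eUY]; exact mx_ne_zero hUY)
  have hg3 : Gc n (mx u oneM) ≤ 4 := Gc_le_four _ (by rw [← eUZ]; exact mx_ne_zero hUZ)
  have hg4 : Gc n y ≤ 4 := Gc_le_four _ (by rw [hydef]; exact mx_ne_zero hXY)
  have hg5 : Gc n oneM ≤ 2 := by
    rw [oneM_eq_eD (show 0 < n by omega)]
    exact Gc_top_le_two (by omega)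
  have hg6 : Gc n (mx y oneM) ≤ 4 := Gc_le_four _ (by rw [← eYZ]; exact mx_ne_zero hYZ)
  have hsecond := second hn y u hyM hy1 hu0 huy hu1 hadj
  have hcomm1 : Gc n (mx u y) = Gc n (mx y u) := by rw [mx_comm]
  -- |T| ≥ |union| - 4
  have hsd : ((Nbr U ∪ Nbr X ∪ Nbr Y ∪ Nbr Z)).card ≤
      T.card + ({U, X, Y, Z} : Finset (Fin n → Bool)).card := by
    rw [hTdef]
    have := Finset.card_le_card_sdiff_add_card
      (s := (Nbr U ∪ Nbr X ∪ Nbr Y ∪ Nbr Z)) (t := ({U, X, Y, Z} : Finset (Fin n → Bool)))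
    exact this
  have hS4 : ({U, X, Y, Z} : Finset (Fin n → Bool)).card ≤ 4 := card_quad_le _ _ _ _
  rw [hcomm1] at hb
  rcases hsecond with h | h | h | h | h <;> omega
end

section
/- Let n ≥ 4 and let C_3 be a cycle of length three in the augmented cube AQ_n. Then the edge boundary E_{AQ_n}(C_3) — the set of edges with exactly one endpoint in V(C_3) — has cardinality 6n − 9, and removing E_{AQ_n}(C_3) from AQ_n yields a disconnected graph in which no connected component is an isolated vertex or an isolated edge. Consequently λ_2(AQ_n) ≤ 6n − 9 for n ≥ 4. -/
section Helpers
variable {n : ℕ}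


lemma flipBit_ne (i : Fin n) (X : Fin n → Bool) : flipBit i X ≠ X := by
  intro h; have := congrFun h i; simp [flipBit] at this

lemma flipDown_ne (i : Fin n) (X : Fin n → Bool) : flipDown i X ≠ X := by
  intro h; have := congrFun h i; simp [flipDown] at this

lemma flipBit_injective (X : Fin n → Bool) :
    Function.Injective (fun i => flipBit i X) := by
  intro i j h
  by_contra hne
  have h1 := congrFun h i
  simp [flipBit, hne] at h1

lemma flipDown_injective (X : Fin n → Bool) :
    Function.Injective (fun i => flipDown i X) := by
  intro i j h
  by_contra hne
  rcases Ne.lt_or_gt hne with hlt | hlt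
  · have h1 := congrFun h j
    simp [flipDown, hlt.not_ge] at h1
  · have h1 := congrFun h i
    simp [flipDown, hlt.not_ge] at h1

lemma flipBit_ne_flipDown (X : Fin n → Bool) {i j : Fin n} (hj : 1 ≤ j.val) :
    flipBit i X ≠ flipDown j X := by
  intro h
  by_cases hi : i.val = 0
  · have h1 := congrFun h j
    have hji : j ≠ i := fun e => by rw [e] at hj; omega
    simp [flipBit, flipDown, hji] at h1
  · have h1 := congrFun h (⟨0, j.pos⟩ : Fin n)
    have hzi : (⟨0, j.pos⟩ : Fin n) ≠ i := fun e => hi (by rw [← e])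
    have hzj : (⟨0, j.pos⟩ : Fin n) ≤ j := by simp [Fin.le_def]
    simp [flipBit, flipDown, hzi, hzj] at h1

lemma mem_neighborSet_augCube {X Y : Fin n → Bool} :
    Y ∈ (augCube n).neighborSet X ↔
      (∃ i, Y = flipBit i X) ∨ ∃ i : Fin n, 1 ≤ i.val ∧ Y = flipDown i X := by
  constructor
  · rintro ⟨_, h⟩; exact h
  · rintro (⟨i, rfl⟩ | ⟨i, hi, rfl⟩)
    · exact ⟨(flipBit_ne i X).symm, Or.inl ⟨i, rfl⟩⟩
    · exact ⟨(flipDown_ne i X).symm, Or.inr ⟨i, hi, rfl⟩⟩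

lemma neighborSet_augCube_eq (X : Fin n → Bool) :
    (augCube n).neighborSet X =
      (Set.range fun i => flipBit i X) ∪
        ((fun i => flipDown i X) '' {i : Fin n | 1 ≤ i.val}) := by
  ext Y
  rw [mem_neighborSet_augCube]
  constructor
  · rintro (⟨i, rfl⟩ | ⟨i, hi, rfl⟩)
    · exact Or.inl ⟨i, rfl⟩
    · exact Or.inr ⟨i, hi, rfl⟩
  · rintro (⟨i, rfl⟩ | ⟨i, hi, rfl⟩)
    · exact Or.inl ⟨i, rfl⟩
    · exact Or.inr ⟨i, hi, rfl⟩

lemma ncard_neighborSet_augCube (hn : 1 ≤ n) (X : Fin n → Bool) :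
    ((augCube n).neighborSet X).ncard = 2 * n - 1 := by
  haveI : NeZero n := ⟨by omega⟩
  rw [neighborSet_augCube_eq]
  have hdisj : Disjoint (Set.range fun i => flipBit i X)
      ((fun i => flipDown i X) '' {i : Fin n | 1 ≤ i.val}) := by
    rw [Set.disjoint_left]
    rintro y ⟨i, rfl⟩ ⟨j, hj, hy⟩
    exact flipBit_ne_flipDown X hj hy.symm
  rw [Set.ncard_union_eq hdisj (Set.toFinite _) (Set.toFinite _)]
  have h1 : (Set.range fun i => flipBit i X).ncard = n := by
    rw [← Set.image_univ, Set.ncard_image_of_injective _ (flipBit_injective X),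
      Set.ncard_univ, Nat.card_eq_fintype_card, Fintype.card_fin]
  have h2 : ((fun i => flipDown i X) '' {i : Fin n | 1 ≤ i.val}).ncard = n - 1 := by
    rw [Set.ncard_image_of_injective _ (flipDown_injective X)]
    have he : {i : Fin n | 1 ≤ i.val} = Set.univ \ {(0 : Fin n)} := by
      ext i
      simp only [Set.mem_setOf_eq, Set.mem_diff, Set.mem_univ, true_and,
        Set.mem_singleton_iff, Fin.ext_iff, Fin.val_zero]
      omega
    rw [he, Set.ncard_diff_singleton_of_mem (Set.mem_univ _),
      Set.ncard_univ, Nat.card_eq_fintype_card, Fintype.card_fin]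
  rw [h1, h2]
  omega


end Helpers


/-- Let `n ≥ 4` and let `C_3 = (A, B, C)` be a cycle of length three in `AQ_n`. Then the
edge boundary `E(C_3)` (edges with exactly one endpoint in `{A, B, C}`) has cardinality
`6n - 9`, its removal disconnects `AQ_n` leaving no component that is an isolated vertex
or an isolated edge (i.e. every component has more than two vertices); consequently
`λ₂(AQ_n) ≤ 6n - 9`. -/
theorem augCube_triangle_boundary (n : ℕ) (hn : 4 ≤ n) (A B C : Fin n → Bool)
    (hAB : (augCube n).Adj A B) (hBC : (augCube n).Adj B C) (hCA : (augCube n).Adj C A) :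
    let T : Set (Fin n → Bool) := {A, B, C}
    let F : Set (Sym2 (Fin n → Bool)) :=
      {e | ∃ u v, e = s(u, v) ∧ (augCube n).Adj u v ∧ u ∈ T ∧ v ∉ T}
    F.ncard = 6 * n - 9 ∧
      ¬ ((augCube n).deleteEdges F).Connected ∧
      (∀ c : ((augCube n).deleteEdges F).ConnectedComponent, 2 < c.supp.ncard) ∧
      sInf {k : ℕ | ∃ F' : Set (Sym2 (Fin n → Bool)), F' ⊆ (augCube n).edgeSet ∧
          F'.ncard = k ∧ ¬ ((augCube n).deleteEdges F').Connected ∧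
          ∀ c : ((augCube n).deleteEdges F').ConnectedComponent, 2 < c.supp.ncard} ≤
        6 * n - 9 := by
  intro T F
  have hAne : A ≠ B := hAB.1
  have hBne : B ≠ C := hBC.1
  have hCne : C ≠ A := hCA.1
  have hAT : A ∈ T := Set.mem_insert _ _
  have hBT : B ∈ T := Or.inr (Set.mem_insert _ _)
  have hCT : C ∈ T := Or.inr (Or.inr rfl)
  have hmemT : ∀ x, x ∈ T ↔ (x = A ∨ x = B ∨ x = C) := by
    intro x
    show x ∈ ({A, B, C} : Set _) ↔ _
    simp
  have hT3 : T.ncard = 3 := by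
    show ({A, B, C} : Set _).ncard = 3
    rw [Set.ncard_insert_of_notMem (by simp; exact ⟨hAne, fun h => hCne h.symm⟩),
      Set.ncard_pair hBne]
  have hadjT : ∀ x ∈ T, ∀ y ∈ T, x ≠ y → (augCube n).Adj x y := by
    intro x hx y hy hxy
    rw [hmemT] at hx hy
    rcases hx with rfl | rfl | rfl <;> rcases hy with rfl | rfl | rfl <;>
      first
        | exact absurd rfl hxy
        | exact hAB | exact hAB.symm | exact hBC | exact hBC.symm
        | exact hCA | exact hCA.symm
  have hNT : ∀ u ∈ T, (augCube n).neighborSet u ∩ T = T \ {u} := by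
    intro u hu
    ext v
    constructor
    · rintro ⟨hv, hvT⟩
      refine ⟨hvT, ?_⟩
      simp only [Set.mem_singleton_iff]
      rintro rfl
      exact (augCube n).irrefl hv
    · rintro ⟨hvT, hvne⟩
      have huv : u ≠ v := fun h => hvne (by simp [h])
      exact ⟨hadjT u hu v hvT huv, hvT⟩
  have hNdiff : ∀ u ∈ T, ((augCube n).neighborSet u \ T).ncard = 2 * n - 3 := by
    intro u hu
    have h1 : (augCube n).neighborSet u \ T
        = (augCube n).neighborSet u \ ((augCube n).neighborSet u ∩ T) := by
      ext v; simp only [Set.mem_diff, Set.mem_inter_iff]; tauto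
    rw [h1, Set.ncard_diff Set.inter_subset_left (Set.toFinite _), hNT u hu,
      ncard_neighborSet_augCube (by omega) u,
      Set.ncard_diff_singleton_of_mem hu, hT3]
    omega
  have hScard : ∀ u ∈ T, ((fun v => s(u, v)) '' ((augCube n).neighborSet u \ T)).ncard
      = 2 * n - 3 := by
    intro u hu
    rw [Set.ncard_image_of_injOn, hNdiff u hu]
    intro v hv v' hv' he
    simp only [Sym2.eq_iff] at he
    rcases he with ⟨-, h⟩ | ⟨h1, h2⟩
    · exact h
    · exact absurd (by rw [← h1]; exact hu) hv'.2
  have hdisjS : ∀ u ∈ T, ∀ u' ∈ T, u ≠ u' →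
      Disjoint ((fun v => s(u, v)) '' ((augCube n).neighborSet u \ T))
        ((fun v => s(u', v)) '' ((augCube n).neighborSet u' \ T)) := by
    intro u hu u' hu' hne
    rw [Set.disjoint_left]
    rintro e ⟨v, hv, rfl⟩ ⟨v', hv', he⟩
    simp only [Sym2.eq_iff] at he
    rcases he with ⟨h1, -⟩ | ⟨h1, h2⟩
    · exact hne h1.symm
    · exact hv'.2 (by rw [h2]; exact hu)
  have hFeq : F = ((fun v => s(A, v)) '' ((augCube n).neighborSet A \ T)) ∪
      ((fun v => s(B, v)) '' ((augCube n).neighborSet B \ T)) ∪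
      ((fun v => s(C, v)) '' ((augCube n).neighborSet C \ T)) := by
    ext e
    constructor
    · rintro ⟨u, v, rfl, hadj, hu, hv⟩
      rw [hmemT] at hu
      rcases hu with rfl | rfl | rfl
      · exact Or.inl (Or.inl ⟨v, ⟨hadj, hv⟩, rfl⟩)
      · exact Or.inl (Or.inr ⟨v, ⟨hadj, hv⟩, rfl⟩)
      · exact Or.inr ⟨v, ⟨hadj, hv⟩, rfl⟩
    · rintro ((⟨v, ⟨hvN, hvT⟩, rfl⟩ | ⟨v, ⟨hvN, hvT⟩, rfl⟩) | ⟨v, ⟨hvN, hvT⟩, rfl⟩)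
      · exact ⟨A, v, rfl, hvN, hAT, hvT⟩
      · exact ⟨B, v, rfl, hvN, hBT, hvT⟩
      · exact ⟨C, v, rfl, hvN, hCT, hvT⟩
  have hFcard : F.ncard = 6 * n - 9 := by
    rw [hFeq,
      Set.ncard_union_eq (Set.disjoint_union_left.mpr
        ⟨hdisjS A hAT C hCT (fun h => hCne h.symm), hdisjS B hBT C hCT hBne⟩)
        (Set.toFinite _) (Set.toFinite _),
      Set.ncard_union_eq (hdisjS A hAT B hBT hAne) (Set.toFinite _) (Set.toFinite _),
      hScard A hAT, hScard B hBT, hScard C hCT]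
    omega
  have hFsub : F ⊆ (augCube n).edgeSet := by
    rintro e ⟨u, v, rfl, hadj, -, -⟩
    exact (SimpleGraph.mem_edgeSet _).mpr hadj
  have hinF : ∀ x ∈ T, ∀ y ∈ T, s(x, y) ∉ F := by
    rintro x hx y hy ⟨u, v, he, hadj, hu, hv⟩
    rw [Sym2.eq_iff] at he
    rcases he with ⟨h1, h2⟩ | ⟨h1, h2⟩
    · exact hv (by rw [← h2]; exact hy)
    · exact hv (by rw [← h1]; exact hx)
  have houtF : ∀ x, x ∉ T → ∀ y, y ∉ T → s(x, y) ∉ F := by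
    rintro x hx y hy ⟨u, v, he, hadj, hu, hv⟩
    rw [Sym2.eq_iff] at he
    rcases he with ⟨h1, h2⟩ | ⟨h1, h2⟩
    · exact hx (by rw [h1]; exact hu)
    · exact hy (by rw [h2]; exact hu)
  have hdelT : ∀ x ∈ T, ∀ y ∈ T, x ≠ y → ((augCube n).deleteEdges F).Adj x y := by
    intro x hx y hy hxy
    rw [SimpleGraph.deleteEdges_adj]
    exact ⟨hadjT x hx y hy hxy, hinF x hx y hy⟩
  have hclosed : ∀ x y, ((augCube n).deleteEdges F).Adj x y → x ∈ T → y ∈ T := by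
    intro x y hxy hx
    rw [SimpleGraph.deleteEdges_adj] at hxy
    by_contra hy
    exact hxy.2 ⟨x, y, rfl, hxy.1, hx, hy⟩
  have hreach : ∀ x y, ((augCube n).deleteEdges F).Reachable x y → x ∈ T → y ∈ T := by
    intro x y hr
    obtain ⟨w⟩ := hr
    induction w with
    | nil => exact id
    | cons h p ih => exact fun hx => ih (hclosed _ _ h hx)
  have hexout : ∃ v, v ∉ T := by
    by_contra h
    push_neg at h
    have h1 : T.ncard = 2 ^ n := by
      rw [Set.eq_univ_of_forall h, Set.ncard_univ, Nat.card_eq_fintype_card]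
      simp
    have h2 : (16 : ℕ) ≤ 2 ^ n := by
      calc (16 : ℕ) = 2 ^ 4 := by norm_num
        _ ≤ 2 ^ n := Nat.pow_le_pow_right (by norm_num) hn
    omega
  have hnotconn : ¬ ((augCube n).deleteEdges F).Connected := by
    intro hc
    obtain ⟨v, hv⟩ := hexout
    exact hv (hreach A v (hc.preconnected A v) hAT)
  have hcomp : ∀ c : ((augCube n).deleteEdges F).ConnectedComponent,
      2 < c.supp.ncard := by
    intro c
    obtain ⟨v, rfl⟩ := c.exists_rep
    show 2 < (((augCube n).deleteEdges F).connectedComponentMk v).supp.ncard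
    by_cases hv : v ∈ T
    · have hsub : T ⊆ (((augCube n).deleteEdges F).connectedComponentMk v).supp := by
        intro x hx
        rw [SimpleGraph.ConnectedComponent.mem_supp_iff, SimpleGraph.ConnectedComponent.eq]
        rcases eq_or_ne x v with rfl | hne
        · exact SimpleGraph.Reachable.refl x
        · exact (hdelT x hx v hv hne).reachable
      calc 2 < 3 := by norm_num
        _ = T.ncard := hT3.symm
        _ ≤ _ := Set.ncard_le_ncard hsub (Set.toFinite _)
    · have hsub : insert v ((augCube n).neighborSet v \ T)
          ⊆ (((augCube n).deleteEdges F).connectedComponentMk v).supp := by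
        intro x hx
        rw [SimpleGraph.ConnectedComponent.mem_supp_iff, SimpleGraph.ConnectedComponent.eq]
        rcases hx with rfl | ⟨hxN, hxT⟩
        · exact SimpleGraph.Reachable.refl x
        · refine SimpleGraph.Adj.reachable ?_
          rw [SimpleGraph.deleteEdges_adj]
          exact ⟨(((augCube n).mem_neighborSet _ _).mp hxN).symm, houtF x hxT v hv⟩
      have hle : ((augCube n).neighborSet v).ncard
          ≤ ((augCube n).neighborSet v \ T).ncard + T.ncard := by
        refine le_trans (Set.ncard_le_ncard ?_ (Set.toFinite _))
          (Set.ncard_union_le _ _)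
        intro x hx
        by_cases h : x ∈ T
        · exact Or.inr h
        · exact Or.inl ⟨hx, h⟩
      rw [ncard_neighborSet_augCube (by omega) v, hT3] at hle
      have h2 : (insert v ((augCube n).neighborSet v \ T)).ncard
          = ((augCube n).neighborSet v \ T).ncard + 1 := by
        rw [Set.ncard_insert_of_notMem (fun h => (augCube n).irrefl h.1) (Set.toFinite _)]
      have h3 := Set.ncard_le_ncard hsub (Set.toFinite _)
      omega
  refine ⟨hFcard, hnotconn, hcomp, ?_⟩
  exact Nat.sInf_le ⟨F, hFsub, hFcard, hnotconn, hcomp⟩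
end
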